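/- arXiv:2105.02375 — 4 statements merged into one kernel-verified Lean document; each statement's English description precedes it below -/
import Mathlib

section
/- Let z ∈ ℝ^K with K ≥ 2, let k ∈ [K], and define the cross-entropy loss L(z, y_k) = log( (Σ_{i=1}^K exp(z_i)) / exp(z_k) ). Then for any c₁ > 0, L(z, y_k) ≥ (1/(1+c₁))·( (Σ_{i=1}^K z_i − K·z_k)/(K−1) ) + c₂, where c₂ = (1/(1+c₁))·log((1+c₁)(K−1)) + (c₁/(1+c₁))·log((1+c₁)/c₁). -/
/-- Lower bound on the cross-entropy loss `L(z, y_k) = log((∑ᵢ exp zᵢ)/exp z_k)`: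
for any `c₁ > 0`,
`L(z, y_k) ≥ (1/(1+c₁))·((∑ᵢ zᵢ − K z_k)/(K−1)) + c₂`, where
`c₂ = (1/(1+c₁)) log((1+c₁)(K−1)) + (c₁/(1+c₁)) log((1+c₁)/c₁)`. -/
theorem stmt6 {K : ℕ} (hK : 2 ≤ K) (z : Fin K → ℝ) (k : Fin K) (c₁ : ℝ) (hc₁ : 0 < c₁) :
    Real.log ((∑ i, Real.exp (z i)) / Real.exp (z k)) ≥
      (1 / (1 + c₁)) * (((∑ i, z i) - (K : ℝ) * z k) / ((K : ℝ) - 1)) +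
        ((1 / (1 + c₁)) * Real.log ((1 + c₁) * ((K : ℝ) - 1)) +
          (c₁ / (1 + c₁)) * Real.log ((1 + c₁) / c₁)) := by
  have h1c : (0:ℝ) < 1 + c₁ := by linarith
  set lam : ℝ := 1 / (1 + c₁) with hlam
  have hlam0 : 0 < lam := by positivity
  have hlam1 : lam < 1 := by
    rw [hlam, div_lt_one h1c]; linarith
  have hlam1' : (0:ℝ) < 1 - lam := by linarith
  have hμ : 1 - lam = c₁ / (1 + c₁) := by rw [hlam]; field_simp; ring
  have hK1 : (0:ℝ) < (K:ℝ) - 1 := by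
    have : (2:ℝ) ≤ (K:ℝ) := by exact_mod_cast hK
    linarith
  set m : ℝ := ((∑ i, z i) - (K:ℝ) * z k) / ((K:ℝ) - 1) with hm
  set T : ℝ := ∑ i ∈ Finset.univ.erase k, Real.exp (z i - z k) with hT
  have hcard : ((Finset.univ.erase k).card : ℝ) = (K:ℝ) - 1 := by
    rw [Finset.card_erase_of_mem (Finset.mem_univ k)]
    rw [Finset.card_univ, Fintype.card_fin, Nat.cast_sub (by omega)]
    simp
  have hsum_d : ∑ i ∈ Finset.univ.erase k, (z i - z k) = ((K:ℝ) - 1) * m := by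
    rw [Finset.sum_erase_eq_sub (Finset.mem_univ k), Finset.sum_sub_distrib,
      Finset.sum_const, Finset.card_univ, Fintype.card_fin, hm,
      mul_div_cancel₀ _ (ne_of_gt hK1)]
    ring
  have hsum2 : ∑ i ∈ Finset.univ.erase k, (1 + (z i - z k) - m) = (K:ℝ) - 1 := by
    have : ∀ i, (1 + (z i - z k) - m) = (z i - z k) + (1 - m) := by intro i; ring
    simp_rw [this]
    rw [Finset.sum_add_distrib, hsum_d, Finset.sum_const, nsmul_eq_mul, hcard]
    ring
  -- lower bound on T
  have hTlb : ((K:ℝ) - 1) * Real.exp m ≤ T := by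
    have h1 : ∀ i ∈ Finset.univ.erase k,
        Real.exp m * (1 + (z i - z k) - m) ≤ Real.exp (z i - z k) := by
      intro i _
      have h0 := Real.add_one_le_exp ((z i - z k) - m)
      have h2 : Real.exp (z i - z k) = Real.exp m * Real.exp ((z i - z k) - m) := by
        rw [← Real.exp_add]; ring_nf
      rw [h2]
      have h3 := mul_le_mul_of_nonneg_left h0 (Real.exp_pos m).le
      calc Real.exp m * (1 + (z i - z k) - m)
          = Real.exp m * ((z i - z k) - m + 1) := by ring
        _ ≤ Real.exp m * Real.exp ((z i - z k) - m) := h3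
    have h3 := Finset.sum_le_sum h1
    rw [← Finset.mul_sum, hsum2] at h3
    linarith [h3]
  have hTpos : 0 < T := lt_of_lt_of_le (by positivity) hTlb
  -- ratio = 1 + T
  have hratio : (∑ i, Real.exp (z i)) / Real.exp (z k) = 1 + T := by
    rw [Finset.sum_div]
    have : ∀ i, Real.exp (z i) / Real.exp (z k) = Real.exp (z i - z k) := by
      intro i; rw [Real.exp_sub]
    simp_rw [this]
    rw [← Finset.add_sum_erase _ _ (Finset.mem_univ k), sub_self, Real.exp_zero]
  rw [hratio]
  -- AM-GM step
  have hamgm := Real.geom_mean_le_arith_mean2_weighted (w₁ := lam) (w₂ := 1 - lam)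
    (p₁ := T / lam) (p₂ := 1 / (1 - lam)) hlam0.le hlam1'.le (by positivity) (by positivity) (by ring)
  have heq : lam * (T / lam) + (1 - lam) * (1 / (1 - lam)) = T + 1 := by
    field_simp [ne_of_gt hlam0, ne_of_gt hlam1']
  rw [heq] at hamgm
  have hlogstep : lam * Real.log (T / lam) + (1 - lam) * Real.log (1 / (1 - lam))
      ≤ Real.log (1 + T) := by
    have hp : (0:ℝ) < (T / lam) ^ lam * (1 / (1 - lam)) ^ (1 - lam) := by positivity
    have := Real.log_le_log hp (by linarith : (T / lam) ^ lam * (1 / (1 - lam)) ^ (1 - lam) ≤ 1 + T)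
    rwa [Real.log_mul (by positivity) (by positivity),
      Real.log_rpow (by positivity), Real.log_rpow (by positivity)] at this
  -- expand logs
  have hlogT : Real.log ((K:ℝ) - 1) + m ≤ Real.log T := by
    have := Real.log_le_log (by positivity) hTlb
    rwa [Real.log_mul (ne_of_gt hK1) (Real.exp_ne_zero m), Real.log_exp] at this
  have hlog1 : Real.log (T / lam) = Real.log T + Real.log (1 + c₁) := by
    rw [Real.log_div (ne_of_gt hTpos) (ne_of_gt hlam0), hlam,
      Real.log_div one_ne_zero (ne_of_gt h1c), Real.log_one]
    ring
  have hlog2 : Real.log (1 / (1 - lam)) = Real.log ((1 + c₁) / c₁) := by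
    rw [hμ, one_div, inv_div]
  have hlog3 : Real.log ((1 + c₁) * ((K:ℝ) - 1)) =
      Real.log (1 + c₁) + Real.log ((K:ℝ) - 1) :=
    Real.log_mul (ne_of_gt h1c) (ne_of_gt hK1)
  rw [hlog1, hlog2] at hlogstep
  rw [ge_iff_le, hlog3, hμ.symm]
  have := mul_le_mul_of_nonneg_left hlogT hlam0.le
  nlinarith [this, hlogstep]
end

section
/- Let g : ℝ^{K×N} → ℝ be differentiable and let f(W, H, b) = g(W·H + b·1ᵀ) + (λ_W/2)‖W‖_F² + (λ_H/2)‖H‖_F² + (λ_b/2)‖b‖₂² with λ_W, λ_H > 0. Then any critical point (W, H, b) of f satisfies λ_W·Wᵀ·W = λ_H·H·Hᵀ, and consequently λ_W·‖W‖_F² = λ_H·‖H‖_F². -/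
open Matrix

attribute [local instance] Matrix.normedAddCommGroup Matrix.normedSpace

def frobSq {m n : ℕ} (A : Matrix (Fin m) (Fin n) ℝ) : ℝ := ∑ i, ∑ j, (A i j) ^ 2

lemma frobSq_eq_trace {m n : ℕ} (A : Matrix (Fin m) (Fin n) ℝ) :
    frobSq A = (Aᵀ * A).trace := by
  simp [frobSq, Matrix.trace, Matrix.mul_apply, Matrix.diag, sq]
  rw [Finset.sum_comm]

/-- Any critical point `(W, H, b)` of
`f(W,H,b) = g(WH + b·1ᵀ) + (λ_W/2)‖W‖_F² + (λ_H/2)‖H‖_F² + (λ_b/2)‖b‖₂²`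
(with `g` differentiable, `λ_W, λ_H > 0`) satisfies `λ_W WᵀW = λ_H HHᵀ`, and consequently
`λ_W ‖W‖_F² = λ_H ‖H‖_F²`. Here `G` is the gradient of `g` at `WH + b·1ᵀ`, and the
critical-point conditions are `G·Hᵀ + λ_W W = 0`, `Wᵀ·G + λ_H H = 0`, and
`∑ⱼ Gⱼ + λ_b b = 0` (column sums). -/
theorem stmt9 {K d N : ℕ} (g : Matrix (Fin K) (Fin N) ℝ → ℝ) (hg : Differentiable ℝ g)
    (lW lH lb : ℝ) (hlW : 0 < lW) (hlH : 0 < lH) (hlb : 0 < lb)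
    (W : Matrix (Fin K) (Fin d) ℝ) (H : Matrix (Fin d) (Fin N) ℝ) (b : Fin K → ℝ)
    (G : Matrix (Fin K) (Fin N) ℝ)
    (hG : ∀ i j, G i j =
      fderiv ℝ g (W * H + Matrix.of fun i' _ => b i') (Matrix.single i j 1))
    (hcrit1 : G * Hᵀ + lW • W = 0)
    (hcrit2 : Wᵀ * G + lH • H = 0)
    (hcrit3 : ∀ k, (∑ j, G k j) + lb * b k = 0) :
    lW • (Wᵀ * W) = lH • (H * Hᵀ) ∧ lW * frobSq W = lH * frobSq H := by
  have h1 : G * Hᵀ = -(lW • W) := eq_neg_of_add_eq_zero_left hcrit1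
  have h2 : Wᵀ * G = -(lH • H) := eq_neg_of_add_eq_zero_left hcrit2
  have key : lW • (Wᵀ * W) = lH • (H * Hᵀ) := by
    have : Wᵀ * (G * Hᵀ) = (Wᵀ * G) * Hᵀ := (Matrix.mul_assoc _ _ _).symm
    rw [h1, h2] at this
    simpa [Matrix.mul_smul, Matrix.smul_mul, neg_inj] using this
  refine ⟨key, ?_⟩
  have tr := congrArg Matrix.trace key
  rw [Matrix.trace_smul, Matrix.trace_smul] at tr
  have hH : frobSq H = (H * Hᵀ).trace := by
    rw [frobSq_eq_trace, Matrix.trace_mul_comm]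
  rw [frobSq_eq_trace W, hH]
  simpa using tr
end

section
/- Let g : ℝ^{K×N} → ℝ be convex and differentiable, λ_W, λ_H, λ_b > 0, and define f(W,H,b) = g(WH + b1ᵀ) + (λ_W/2)‖W‖_F² + (λ_H/2)‖H‖_F² + (λ_b/2)‖b‖₂² and f̃(Z,b) = g(Z + b·1ᵀ) + √(λ_W·λ_H)·‖Z‖_* + (λ_b/2)‖b‖₂². If (Z*, b*) is a global minimizer of f̃, then f̃(Z*, b*) ≤ f(W, H, b) for all W ∈ ℝ^{K×d}, H ∈ ℝ^{d×N}, b ∈ ℝ^K. -/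
open Matrix

attribute [local instance] Matrix.normedAddCommGroup Matrix.normedSpace

/-- The nuclear norm of a real matrix: the sum of its singular values. -/
noncomputable def nuclearNorm {K N : ℕ} (Z : Matrix (Fin K) (Fin N) ℝ) : ℝ :=
  ∑ i, Real.sqrt ((show (Zᵀ * Z).IsHermitian by
    simpa [Matrix.conjTranspose_eq_transpose_of_trivial] using
      Matrix.isHermitian_conjTranspose_mul_self Z).eigenvalues i)

/-- The convex objective `f̃(Z,b) = g(Z + b·1ᵀ) + √(λ_W λ_H)‖Z‖_* + (λ_b/2)‖b‖₂²`. -/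
noncomputable def ftilde {K N : ℕ} (g : Matrix (Fin K) (Fin N) ℝ → ℝ) (lW lH lb : ℝ)
    (Z : Matrix (Fin K) (Fin N) ℝ) (b : Fin K → ℝ) : ℝ :=
  g (Z + Matrix.of fun i _ => b i) + Real.sqrt (lW * lH) * nuclearNorm Z +
    lb / 2 * ∑ i, (b i) ^ 2

lemma traceCT {m n : ℕ} (M : Matrix (Fin m) (Fin n) ℝ) :
    Matrix.trace (Mᴴ * M) = ∑ j, ∑ i, (M i j)^2 := by
  simp [Matrix.trace, Matrix.mul_apply, Matrix.diag, sq, Matrix.conjTranspose_apply]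

lemma traceCT_nonneg {m n : ℕ} (M : Matrix (Fin m) (Fin n) ℝ) :
    0 ≤ Matrix.trace (Mᴴ * M) := by
  rw [traceCT]
  positivity

lemma dotZZ {K N : ℕ} (Z : Matrix (Fin K) (Fin N) ℝ) (a b : Fin N → ℝ) :
    (Z *ᵥ a) ⬝ᵥ (Z *ᵥ b) = a ⬝ᵥ ((Zᴴ * Z) *ᵥ b) := by
  rw [conjTranspose_eq_transpose_of_trivial, ← mulVec_mulVec,
    Matrix.dotProduct_mulVec a, vecMul_transpose, dotProduct_comm]

lemma nuclearNorm_mul_le {K N d : ℕ} (W : Matrix (Fin K) (Fin d) ℝ)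
    (H : Matrix (Fin d) (Fin N) ℝ) :
    nuclearNorm (W * H) ≤ Real.sqrt (frobSq W) * Real.sqrt (frobSq H) := by
  set Z := W * H with hZ
  set hA := Matrix.isHermitian_conjTranspose_mul_self Z with hhA
  set μ : Fin N → ℝ := hA.eigenvalues with hμdef
  have hμ : ∀ j, 0 ≤ μ j := eigenvalues_conjTranspose_mul_self_nonneg Z
  set σ : Fin N → ℝ := fun j => Real.sqrt (μ j) with hσdef
  have hσ : ∀ j, 0 ≤ σ j := fun j => Real.sqrt_nonneg _
  have hσsq : ∀ j, σ j ^ 2 = μ j := fun j => Real.sq_sqrt (hμ j)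
  set v : Fin N → Fin N → ℝ := fun j => ⇑(hA.eigenvectorBasis j) with hvdef
  have hAv : ∀ j, (Zᴴ * Z) *ᵥ v j = μ j • v j := fun j => hA.mulVec_eigenvectorBasis j
  have hvv : ∀ i j, v i ⬝ᵥ v j = if i = j then 1 else 0 := by
    intro i j
    have horth := hA.eigenvectorBasis.orthonormal
    rw [orthonormal_iff_ite] at horth
    have h := horth i j
    rw [← h]
    simp [PiLp.inner_apply, dotProduct, hvdef, mul_comm]
  have hZv : ∀ i j, (Z *ᵥ v i) ⬝ᵥ (Z *ᵥ v j) = if i = j then μ j else 0 := by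
    intro i j
    rw [dotZZ, hAv, dotProduct_smul, hvv]
    by_cases h : i = j <;> simp [h]
  set u : Fin N → Fin K → ℝ := fun j => (σ j)⁻¹ • (Z *ᵥ v j) with hudef
  have hu0 : ∀ j, σ j = 0 → u j = 0 := by
    intro j h; simp [hudef, h]
  have huZv : ∀ j, u j ⬝ᵥ (Z *ᵥ v j) = σ j := by
    intro j
    rw [hudef]
    simp only [smul_dotProduct, hZv j j, if_pos rfl, smul_eq_mul]
    rcases eq_or_ne (σ j) 0 with h | h
    · rw [h, ← hσsq j, h]; ring
    · rw [← hσsq j]; field_simp; simp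
  have huu : ∀ i j, u i ⬝ᵥ u j = if i = j then (if σ j = 0 then 0 else 1) else 0 := by
    intro i j
    simp only [hudef, smul_dotProduct, dotProduct_smul, hZv i j, smul_eq_mul]
    rcases eq_or_ne i j with rfl | hne
    · simp only [if_pos rfl]
      rcases eq_or_ne (σ i) 0 with h | h
      · simp [h]
      · rw [if_neg h, ← hσsq i]; field_simp; simp
    · simp [hne]
  -- matrices
  set V : Matrix (Fin N) (Fin N) ℝ := (hA.eigenvectorUnitary : Matrix (Fin N) (Fin N) ℝ) with hVdef
  have hVV : V * Vᴴ = 1 := by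
    rw [← Matrix.star_eq_conjTranspose]
    exact (Matrix.mem_unitaryGroup_iff).mp hA.eigenvectorUnitary.2
  have hVapp : ∀ k j, V k j = v j k := fun k j => rfl
  set U : Matrix (Fin K) (Fin N) ℝ := Matrix.of (fun k j => u j k) with hUdef
  set ε : Fin N → ℝ := fun j => if σ j = 0 then 0 else 1 with hεdef
  have hUU : Uᴴ * U = Matrix.diagonal ε := by
    ext j k
    simp only [Matrix.mul_apply, Matrix.conjTranspose_apply, hUdef, Matrix.of_apply, star_trivial,
      Matrix.diagonal]
    have := huu j k
    simp only [dotProduct] at this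
    rw [this]
    rcases eq_or_ne j k with rfl | hne
    · simp [hεdef]
    · simp [hne]
  set P : Matrix (Fin K) (Fin K) ℝ := U * Uᴴ with hPdef
  have hPh : Pᴴ = P := by rw [hPdef, Matrix.conjTranspose_mul, Matrix.conjTranspose_conjTranspose]
  have hUdiag : U * Matrix.diagonal ε = U := by
    ext i j
    rw [Matrix.mul_diagonal]
    rcases eq_or_ne (σ j) 0 with h | h
    · simp [hεdef, h, hUdef, hu0 j h]
    · simp [hεdef, h]
  have hPP : P * P = P := by
    rw [hPdef, Matrix.mul_assoc, ← Matrix.mul_assoc Uᴴ, hUU, ← Matrix.mul_assoc, hUdiag]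
  -- the vectors w and x
  set w : Fin N → Fin d → ℝ := fun j => Matrix.vecMul (u j) W with hwdef
  set x : Fin N → Fin d → ℝ := fun j => H *ᵥ v j with hxdef
  have hσwx : ∀ j, σ j = w j ⬝ᵥ x j := by
    intro j
    rw [← huZv j, hZ, ← Matrix.mulVec_mulVec, Matrix.dotProduct_mulVec]
  set a : Fin N → ℝ := fun j => w j ⬝ᵥ w j with hadef
  set b : Fin N → ℝ := fun j => x j ⬝ᵥ x j with hbdef
  have ha0 : ∀ j, 0 ≤ a j := fun j => Finset.sum_nonneg fun i _ => mul_self_nonneg _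
  have hb0 : ∀ j, 0 ≤ b j := fun j => Finset.sum_nonneg fun i _ => mul_self_nonneg _
  -- ∑ b = frobSq H
  have hsumb : ∑ j, b j = frobSq H := by
    have hM : ∀ i j, (H * V) i j = x j i := by
      intro i j
      simp [Matrix.mul_apply, hxdef, Matrix.mulVec, dotProduct, hVapp]
    have h1 : ∑ j, b j = Matrix.trace ((H * V)ᴴ * (H * V)) := by
      rw [traceCT]
      refine Finset.sum_congr rfl fun j _ => ?_
      simp only [hbdef, dotProduct]
      refine Finset.sum_congr rfl fun i _ => ?_
      rw [hM i j]; ring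
    rw [h1, Matrix.conjTranspose_mul, Matrix.mul_assoc, Matrix.trace_mul_comm,
      Matrix.mul_assoc, Matrix.mul_assoc, hVV, Matrix.mul_one, traceCT]
    simp only [frobSq]
    exact Finset.sum_comm
  -- ∑ a ≤ frobSq W
  have hsuma : ∑ j, a j ≤ frobSq W := by
    have hM : ∀ i j, (Wᴴ * U) i j = w j i := by
      intro i j
      simp [Matrix.mul_apply, hwdef, Matrix.vecMul, dotProduct, Matrix.conjTranspose_apply,
        hUdef, mul_comm]
    have h1 : ∑ j, a j = Matrix.trace ((Wᴴ * U)ᴴ * (Wᴴ * U)) := by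
      rw [traceCT]
      refine Finset.sum_congr rfl fun j _ => ?_
      simp only [hadef, dotProduct]
      refine Finset.sum_congr rfl fun i _ => ?_
      rw [hM i j]; ring
    have h2 : Matrix.trace ((Wᴴ * U)ᴴ * (Wᴴ * U)) = Matrix.trace (W * Wᴴ * P) := by
      rw [Matrix.conjTranspose_mul, Matrix.conjTranspose_conjTranspose, Matrix.mul_assoc,
        Matrix.trace_mul_comm, hPdef]
      congr 1
      simp only [Matrix.mul_assoc]
    have h3 : frobSq W = Matrix.trace (W * Wᴴ) := by
      rw [Matrix.trace_mul_comm, traceCT]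
      simp only [frobSq]
      exact Finset.sum_comm
    rw [h1, h2, h3]
    -- trace (WWᴴ) - trace (WWᴴ P) = trace ((Q W)(Q W)ᴴ) ≥ 0, Q = 1 - P
    set Q : Matrix (Fin K) (Fin K) ℝ := 1 - P with hQdef
    have hQh : Qᴴ = Q := by rw [hQdef, Matrix.conjTranspose_sub, hPh, Matrix.conjTranspose_one]
    have hQQ : Q * Q = Q := by
      rw [hQdef]
      simp only [Matrix.sub_mul, Matrix.mul_sub, Matrix.one_mul, Matrix.mul_one, hPP]
      abel
    have key : Matrix.trace (W * Wᴴ) - Matrix.trace (W * Wᴴ * P)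
        = Matrix.trace ((Q * W)ᴴ * (Q * W)) := by
      rw [← Matrix.trace_sub]
      have e0 : W * Wᴴ - W * Wᴴ * P = W * Wᴴ * Q := by
        rw [hQdef, Matrix.mul_sub, Matrix.mul_one]
      rw [e0, Matrix.conjTranspose_mul, hQh]
      conv_lhs => rw [← hQQ, ← Matrix.mul_assoc, Matrix.trace_mul_comm]
      rw [Matrix.trace_mul_comm (Wᴴ * Q)]
      congr 1
      simp only [Matrix.mul_assoc]
    have hnn := traceCT_nonneg (Q * W)
    linarith
  -- Cauchy-Schwarz chain
  have step1 : nuclearNorm Z = ∑ j, σ j := rfl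
  have step2 : ∀ j, σ j ≤ Real.sqrt (a j) * Real.sqrt (b j) := by
    intro j
    rw [hσwx j]
    have hcs : (w j ⬝ᵥ x j) ^ 2 ≤ a j * b j := by
      have := Finset.sum_mul_sq_le_sq_mul_sq Finset.univ (w j) (x j)
      simpa [dotProduct, hadef, hbdef, sq] using this
    calc w j ⬝ᵥ x j ≤ |w j ⬝ᵥ x j| := le_abs_self _
      _ = Real.sqrt ((w j ⬝ᵥ x j) ^ 2) := (Real.sqrt_sq_eq_abs _).symm
      _ ≤ Real.sqrt (a j * b j) := Real.sqrt_le_sqrt hcs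
      _ = Real.sqrt (a j) * Real.sqrt (b j) := Real.sqrt_mul (ha0 j) _
  have step3 : (∑ j, Real.sqrt (a j) * Real.sqrt (b j)) ^ 2 ≤ (∑ j, a j) * (∑ j, b j) := by
    apply Finset.sum_sq_le_sum_mul_sum_of_sq_eq_mul
    · exact fun i _ => ha0 i
    · exact fun i _ => hb0 i
    · intro i _
      rw [mul_pow, Real.sq_sqrt (ha0 i), Real.sq_sqrt (hb0 i)]
  have hsum_nonneg : 0 ≤ ∑ j, Real.sqrt (a j) * Real.sqrt (b j) :=
    Finset.sum_nonneg fun i _ => mul_nonneg (Real.sqrt_nonneg _) (Real.sqrt_nonneg _)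
  have step4 : ∑ j, Real.sqrt (a j) * Real.sqrt (b j)
      ≤ Real.sqrt (∑ j, a j) * Real.sqrt (∑ j, b j) := by
    rw [← Real.sqrt_mul (Finset.sum_nonneg fun i _ => ha0 i)]
    calc ∑ j, Real.sqrt (a j) * Real.sqrt (b j)
        = Real.sqrt ((∑ j, Real.sqrt (a j) * Real.sqrt (b j)) ^ 2) := (Real.sqrt_sq hsum_nonneg).symm
      _ ≤ Real.sqrt ((∑ j, a j) * (∑ j, b j)) := Real.sqrt_le_sqrt step3
  calc nuclearNorm Z = ∑ j, σ j := step1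
    _ ≤ ∑ j, Real.sqrt (a j) * Real.sqrt (b j) := Finset.sum_le_sum fun j _ => step2 j
    _ ≤ Real.sqrt (∑ j, a j) * Real.sqrt (∑ j, b j) := step4
    _ ≤ Real.sqrt (frobSq W) * Real.sqrt (frobSq H) := by
        rw [hsumb]
        apply mul_le_mul_of_nonneg_right _ (Real.sqrt_nonneg _)
        exact Real.sqrt_le_sqrt hsuma

lemma nuclearNorm_nonneg {K N : ℕ} (Z : Matrix (Fin K) (Fin N) ℝ) : 0 ≤ nuclearNorm Z :=
  Finset.sum_nonneg fun i _ => Real.sqrt_nonneg _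

lemma frobSq_nonneg {m n : ℕ} (A : Matrix (Fin m) (Fin n) ℝ) : 0 ≤ frobSq A :=
  Finset.sum_nonneg fun i _ => Finset.sum_nonneg fun j _ => sq_nonneg _

/-- If `(Z*, b*)` is a global minimizer of `f̃`, then `f̃(Z*, b*)` lower bounds the
nonconvex objective `f(W,H,b) = g(WH + b·1ᵀ) + (λ_W/2)‖W‖_F² + (λ_H/2)‖H‖_F²
+ (λ_b/2)‖b‖₂²` for all `W, H, b` (any inner dimension `d`). -/
theorem stmt11 {K N : ℕ} (g : Matrix (Fin K) (Fin N) ℝ → ℝ)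
    (hgconv : ConvexOn ℝ Set.univ g) (hgdiff : Differentiable ℝ g)
    (lW lH lb : ℝ) (hlW : 0 < lW) (hlH : 0 < lH) (hlb : 0 < lb)
    (Zstar : Matrix (Fin K) (Fin N) ℝ) (bstar : Fin K → ℝ)
    (hmin : ∀ (Z : Matrix (Fin K) (Fin N) ℝ) (b : Fin K → ℝ),
      ftilde g lW lH lb Zstar bstar ≤ ftilde g lW lH lb Z b) :
    ∀ (d : ℕ) (W : Matrix (Fin K) (Fin d) ℝ) (H : Matrix (Fin d) (Fin N) ℝ) (b : Fin K → ℝ),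
      ftilde g lW lH lb Zstar bstar ≤
        g (W * H + Matrix.of fun i _ => b i) + lW / 2 * frobSq W + lH / 2 * frobSq H +
          lb / 2 * ∑ i, (b i) ^ 2 := by
  intro d W H b
  refine le_trans (hmin (W * H) b) ?_
  rw [ftilde]
  have key : Real.sqrt (lW * lH) * nuclearNorm (W * H)
      ≤ lW / 2 * frobSq W + lH / 2 * frobSq H := by
    have h1 := nuclearNorm_mul_le W H
    have hWn := frobSq_nonneg W
    have hHn := frobSq_nonneg H
    have step : Real.sqrt (lW * lH) * nuclearNorm (W * H)
        ≤ Real.sqrt (lW * lH) * (Real.sqrt (frobSq W) * Real.sqrt (frobSq H)) :=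
      mul_le_mul_of_nonneg_left h1 (Real.sqrt_nonneg _)
    refine le_trans step ?_
    have heq : Real.sqrt (lW * lH) * (Real.sqrt (frobSq W) * Real.sqrt (frobSq H))
        = Real.sqrt (lW * frobSq W) * Real.sqrt (lH * frobSq H) := by
      rw [Real.sqrt_mul hlW.le, Real.sqrt_mul hlW.le, Real.sqrt_mul hlH.le]
      ring
    rw [heq]
    set xx := Real.sqrt (lW * frobSq W) with hxx
    set yy := Real.sqrt (lH * frobSq H) with hyy
    have hx2 : xx ^ 2 = lW * frobSq W := Real.sq_sqrt (by positivity)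
    have hy2 : yy ^ 2 = lH * frobSq H := Real.sq_sqrt (by positivity)
    nlinarith [sq_nonneg (xx - yy)]
  linarith
end

section
/- Let g : ℝ^{K×N} → ℝ be twice differentiable, λ_W, λ_H, λ_b > 0, d > K, and f(W,H,b) = g(WH + b1ᵀ) + (λ_W/2)‖W‖_F² + (λ_H/2)‖H‖_F² + (λ_b/2)‖b‖₂². Suppose (W, H, b) is a critical point of f with operator norm ‖∇g(WH + b1ᵀ)‖ > √(λ_W·λ_H). Then there exists a direction Δ = (Δ_W, Δ_H, 0) along which the Hessian quadratic form of f is strictly negative: ∇²f(W,H,b)[Δ,Δ] < 0. -/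
open Matrix

attribute [local instance] Matrix.normedAddCommGroup Matrix.normedSpace

/-- The ℓ₂ operator norm of a matrix. -/
noncomputable def matOpNorm {K N : ℕ} (G : Matrix (Fin K) (Fin N) ℝ) : ℝ :=
  ‖LinearMap.toContinuousLinearMap (Matrix.toEuclideanLin G)‖

/-- Strict saddle: let `g` be twice differentiable, `d > K`, and
`f(W,H,b) = g(WH + b1ᵀ) + (λ_W/2)‖W‖_F² + (λ_H/2)‖H‖_F² + (λ_b/2)‖b‖₂²`.
Here `G = ∇g(WH + b1ᵀ)` and `B = ∇²g(WH + b1ᵀ)` (as a bilinear form); the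
critical-point equations of `f` are `G·Hᵀ + λ_W W = 0`, `Wᵀ·G + λ_H H = 0`,
`∑ⱼ Gⱼ + λ_b b = 0`. If the operator norm of `G` exceeds `√(λ_W λ_H)`, then there
is a direction `Δ = (Δ_W, Δ_H, 0)` along which the Hessian quadratic form of `f`,
`∇²g[WΔ_H + Δ_W H + Δ_b 1ᵀ, ·] + 2⟨G, Δ_W Δ_H⟩ + λ_W‖Δ_W‖_F² + λ_H‖Δ_H‖_F²
+ λ_b‖Δ_b‖₂²`, is strictly negative. -/
theorem stmt15 {K N d : ℕ} (hd : K < d)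
    (g : Matrix (Fin K) (Fin N) ℝ → ℝ) (hg : ContDiff ℝ 2 g)
    (lW lH lb : ℝ) (hlW : 0 < lW) (hlH : 0 < lH) (hlb : 0 < lb)
    (W : Matrix (Fin K) (Fin d) ℝ) (H : Matrix (Fin d) (Fin N) ℝ) (b : Fin K → ℝ)
    (G : Matrix (Fin K) (Fin N) ℝ)
    (hG : ∀ i j, G i j =
      fderiv ℝ g (W * H + Matrix.of fun i' _ => b i') (Matrix.single i j 1))
    (B : Matrix (Fin K) (Fin N) ℝ →ₗ[ℝ] Matrix (Fin K) (Fin N) ℝ →ₗ[ℝ] ℝ)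
    (hB : ∀ A C : Matrix (Fin K) (Fin N) ℝ,
      B A C = iteratedFDeriv ℝ 2 g (W * H + Matrix.of fun i' _ => b i') ![A, C])
    (hcrit1 : G * Hᵀ + lW • W = 0)
    (hcrit2 : Wᵀ * G + lH • H = 0)
    (hcrit3 : ∀ k, (∑ j, G k j) + lb * b k = 0)
    (hop : Real.sqrt (lW * lH) < matOpNorm G) :
    ∃ (ΔW : Matrix (Fin K) (Fin d) ℝ) (ΔH : Matrix (Fin d) (Fin N) ℝ),
      B (W * ΔH + ΔW * H + Matrix.of fun _ _ => (0 : ℝ))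
          (W * ΔH + ΔW * H + Matrix.of fun _ _ => (0 : ℝ)) +
        2 * (∑ i, ∑ j, G i j * (ΔW * ΔH) i j) +
        lW * frobSq ΔW + lH * frobSq ΔH + lb * ∑ i : Fin K, (0 : ℝ) ^ 2 < 0 := by
  classical
  -- kernel vector a with W a = 0
  have hninj : ¬ Function.Injective W.mulVecLin := by
    intro hinj
    have h1 := LinearMap.finrank_le_finrank_of_injective hinj
    rw [Module.finrank_fin_fun, Module.finrank_fin_fun] at h1
    omega
  rw [Function.not_injective_iff] at hninj
  obtain ⟨a₁, a₂, hEq, hne⟩ := hninj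
  set a : Fin d → ℝ := a₁ - a₂ with ha
  have hane : a ≠ 0 := sub_ne_zero_of_ne hne
  have hWa : W.mulVec a = 0 := by
    rw [ha, Matrix.mulVec_sub]
    simpa [sub_eq_zero] using hEq
  -- key identity lH (H Hᵀ) = lW (Wᵀ W)
  have e1 : G * Hᵀ = -(lW • W) := eq_neg_of_add_eq_zero_left hcrit1
  have e2 : Wᵀ * G = -(lH • H) := eq_neg_of_add_eq_zero_left hcrit2
  have key : lH • (H * Hᵀ) = lW • (Wᵀ * W) := by
    have : Wᵀ * (G * Hᵀ) = (Wᵀ * G) * Hᵀ := (Matrix.mul_assoc _ _ _).symm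
    rw [e1, e2] at this
    simpa [Matrix.mul_smul, Matrix.smul_mul, Matrix.mul_neg, Matrix.neg_mul] using this.symm
  -- Hᵀ a = 0
  have hHa : ∀ j, ∑ k, a k * H k j = 0 := by
    have hq : a ⬝ᵥ ((lH • (H * Hᵀ)).mulVec a) = lH * ∑ j, (∑ k, a k * H k j)^2 := by
      rw [Matrix.smul_mulVec, dotProduct_smul, ← Matrix.mulVec_mulVec,
        Matrix.mulVec_transpose]
      congr 1
      rw [Matrix.dotProduct_mulVec]
      simp [dotProduct, Matrix.vecMul, sq]
    have hq0 : a ⬝ᵥ ((lW • (Wᵀ * W)).mulVec a) = 0 := by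
      rw [Matrix.smul_mulVec, ← Matrix.mulVec_mulVec, hWa]
      simp
    rw [← key, hq] at hq0
    have hsum : ∑ j, (∑ k, a k * H k j)^2 = 0 := by
      rcases mul_eq_zero.mp hq0 with h | h
      · exact absurd h (ne_of_gt hlH)
      · exact h
    intro j
    have := (Finset.sum_eq_zero_iff_of_nonneg (fun j _ => sq_nonneg _)).mp hsum j
      (Finset.mem_univ j)
    exact pow_eq_zero_iff (by norm_num) |>.mp this
  -- vector x with c ‖x‖ < ‖G x‖
  set c : ℝ := Real.sqrt (lW * lH) with hcdef
  have hc0 : 0 ≤ c := Real.sqrt_nonneg _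
  have hc2 : c ^ 2 = lW * lH := Real.sq_sqrt (by positivity)
  have hx : ∃ x : EuclideanSpace ℝ (Fin N), c * ‖x‖ < ‖Matrix.toEuclideanLin G x‖ := by
    by_contra hcon
    push_neg at hcon
    have := ContinuousLinearMap.opNorm_le_bound
      (LinearMap.toContinuousLinearMap (Matrix.toEuclideanLin G)) hc0
      (fun x => by simpa [mul_comm] using hcon x)
    rw [matOpNorm] at hop
    linarith
  obtain ⟨x, hx⟩ := hx
  set v : Fin N → ℝ := fun j => x j with hv
  set y : Fin K → ℝ := G.mulVec v with hy
  set X : ℝ := ∑ j, (v j) ^ 2 with hX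
  set Y : ℝ := ∑ i, (y i) ^ 2 with hY
  have hX0 : 0 ≤ X := Finset.sum_nonneg fun _ _ => sq_nonneg _
  have hnx : ‖x‖ ^ 2 = X := by
    rw [EuclideanSpace.norm_eq, Real.sq_sqrt (by positivity)]
    simp only [Real.norm_eq_abs, sq_abs]
    rfl
  have hnGx : ‖Matrix.toEuclideanLin G x‖ ^ 2 = Y := by
    rw [EuclideanSpace.norm_eq, Real.sq_sqrt (by positivity)]
    simp only [Real.norm_eq_abs, sq_abs]
    rfl
  have hYX : lW * lH * X < Y := by
    have h1 : (c * ‖x‖) ^ 2 < ‖Matrix.toEuclideanLin G x‖ ^ 2 := by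
      have := mul_self_lt_mul_self (by positivity) hx
      simpa [sq] using this
    rw [mul_pow, hc2, hnx, hnGx] at h1
    linarith
  -- positivity of A
  set A : ℝ := ∑ k, (a k) ^ 2 with hA
  have hA0 : 0 < A := by
    obtain ⟨k, hk⟩ := Function.ne_iff.mp hane
    exact Finset.sum_pos' (fun _ _ => sq_nonneg _)
      ⟨k, Finset.mem_univ k, by
        have hk' : a k ≠ 0 := by simpa using hk
        positivity⟩
  -- the direction
  refine ⟨Matrix.of fun i k => y i * a k, Matrix.of fun k j => -(lW * (a k * v j)), ?_⟩
  set ΔW : Matrix (Fin K) (Fin d) ℝ := Matrix.of fun i k => y i * a k with hDW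
  set ΔH : Matrix (Fin d) (Fin N) ℝ := Matrix.of fun k j => -(lW * (a k * v j)) with hDH
  -- the B-argument matrix is zero
  have hz : W * ΔH + ΔW * H + (Matrix.of fun _ _ => (0 : ℝ)) = 0 := by
    ext i j
    simp only [Matrix.add_apply, Matrix.mul_apply, hDW, hDH, Matrix.of_apply,
      Matrix.zero_apply]
    have h1 : ∑ k, W i k * -(lW * (a k * v j)) = -(lW * v j) * ∑ k, W i k * a k := by
      rw [Finset.mul_sum]
      exact Finset.sum_congr rfl fun k _ => by ring
    have h2 : ∑ k, (y i * a k) * H k j = y i * ∑ k, a k * H k j := by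
      rw [Finset.mul_sum]
      exact Finset.sum_congr rfl fun k _ => by ring
    have hWai : ∑ k, W i k * a k = 0 := congrFun hWa i
    rw [h1, h2, hWai, hHa j]
    ring
  rw [hz]
  simp only [map_zero, LinearMap.zero_apply]
  -- compute the product term
  have hprod : ∀ i j, (ΔW * ΔH) i j = -(lW * A) * (y i * v j) := by
    intro i j
    simp only [Matrix.mul_apply, hDW, hDH, Matrix.of_apply]
    calc ∑ k, (y i * a k) * -(lW * (a k * v j))
        = ∑ k, (-(lW) * (y i * v j)) * (a k) ^ 2 :=
          Finset.sum_congr rfl fun k _ => by ring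
      _ = (-(lW) * (y i * v j)) * A := by rw [← Finset.mul_sum]
      _ = -(lW * A) * (y i * v j) := by ring
  have hSG : ∑ i, ∑ j, G i j * (ΔW * ΔH) i j = -(lW * A) * Y := by
    have : ∀ i, ∑ j, G i j * (ΔW * ΔH) i j = -(lW * A) * (y i) ^ 2 := by
      intro i
      have hyi : y i = ∑ j, G i j * v j := rfl
      calc ∑ j, G i j * (ΔW * ΔH) i j
          = ∑ j, (-(lW * A) * y i) * (G i j * v j) := by
            exact Finset.sum_congr rfl fun j _ => by rw [hprod]; ring
        _ = (-(lW * A) * y i) * ∑ j, G i j * v j := by rw [← Finset.mul_sum]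
        _ = -(lW * A) * (y i) ^ 2 := by rw [← hyi]; ring
    calc ∑ i, ∑ j, G i j * (ΔW * ΔH) i j = ∑ i, -(lW * A) * (y i) ^ 2 :=
          Finset.sum_congr rfl fun i _ => this i
      _ = -(lW * A) * Y := by rw [← Finset.mul_sum]
  -- frobSq values
  have hfW : frobSq ΔW = Y * A := by
    rw [frobSq, hY, hA, Fintype.sum_mul_sum]
    exact Finset.sum_congr rfl fun i _ => Finset.sum_congr rfl fun k _ => by
      simp only [hDW, Matrix.of_apply]; ring
  have hfH : frobSq ΔH = lW ^ 2 * (A * X) := by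
    rw [frobSq]
    have : ∀ k j, (ΔH k j) ^ 2 = lW ^ 2 * ((a k) ^ 2 * (v j) ^ 2) := by
      intro k j; simp only [hDH, Matrix.of_apply]; ring
    calc ∑ k, ∑ j, (ΔH k j) ^ 2 = ∑ k, ∑ j, lW ^ 2 * ((a k) ^ 2 * (v j) ^ 2) :=
          Finset.sum_congr rfl fun k _ => Finset.sum_congr rfl fun j _ => this k j
      _ = lW ^ 2 * ∑ k, ∑ j, (a k) ^ 2 * (v j) ^ 2 := by
          rw [Finset.mul_sum]
          exact Finset.sum_congr rfl fun k _ => by rw [Finset.mul_sum]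
      _ = lW ^ 2 * (A * X) := by rw [hA, hX, Fintype.sum_mul_sum]
  rw [hSG, hfW, hfH]
  have hfin : lW * A * (lW * lH * X - Y) < 0 :=
    mul_neg_of_pos_of_neg (mul_pos hlW hA0) (by linarith)
  have : (0:ℝ) + 2 * (-(lW * A) * Y) + lW * (Y * A) + lH * (lW ^ 2 * (A * X))
      + lb * ∑ i : Fin K, (0:ℝ) ^ 2 = lW * A * (lW * lH * X - Y) := by
    simp
    ring
  rw [this]
  exact hfin
end
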